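/- Let D be a finite directed acyclic graph with vertex set V and let π : V → ℕ be a monotone weight function, i.e., π(u) ≤ π(v) whenever there is an arc (u,v) in D. Let w be the width of D (the maximum size of an antichain). Then there exist a chain partition P = {C_1, ..., C_w} of D into exactly w chains and a tower of antichains T = (N_1, ..., N_w) with |N_i| = i such that the price of P equals the value of T, i.e., Σ_{j=1}^{w} max_{v ∈ C_j} π(v) = Σ_{i=1}^{w} min_{v ∈ N_i} π(v). -/

import Mathlib

/-- A chain of a DAG `A`: vertices pairwise joined (in some order) by nontrivial directed paths. -/
def IsChainD {V : Type*} (A : V → V → Prop) (C : Finset V) : Prop :=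
  ∀ u ∈ C, ∀ v ∈ C, u ≠ v → Relation.TransGen A u v ∨ Relation.TransGen A v u

/-- An antichain of a DAG `A`: no nontrivial directed path between two of its vertices. -/
def IsAntichainD {V : Type*} (A : V → V → Prop) (N : Finset V) : Prop :=
  ∀ u ∈ N, ∀ v ∈ N, u ≠ v → ¬ Relation.TransGen A u v

set_option linter.unusedSectionVars false

open Finset

section Aux
open scoped Classical

variable {V : Type*} [Fintype V] [DecidableEq V] (A : V → V → Prop)

noncomputable def nbr (v : V) : Finset V := univ.filter (fun u => Relation.TransGen A v u)

noncomputable def NB (T : Finset V) : Finset V := T.biUnion (nbr A)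

def Ind (S : Finset V) : Prop := ∀ T ⊆ S, T.card ≤ (NB A T).card

lemma mem_nbr {v u : V} : u ∈ nbr A v ↔ Relation.TransGen A v u := by
  simp [nbr]

lemma NB_mono {T T' : Finset V} (h : T ⊆ T') : NB A T ⊆ NB A T' :=
  Finset.biUnion_subset_biUnion_of_subset_left _ h

lemma NB_union (T T' : Finset V) : NB A (T ∪ T') = NB A T ∪ NB A T' := by
  ext x; simp [NB, mem_biUnion, or_and_right, exists_or]

lemma ind_mono {S S' : Finset V} (h : S ⊆ S') (hS' : Ind A S') : Ind A S :=
  fun T hT => hS' T (hT.trans h)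

lemma ind_empty : Ind A ∅ := by
  intro T hT
  simp [Finset.subset_empty.mp hT]

/-- The submodular deficiency-counting lemma. -/
lemma deficiency {S : Finset V} (hS : Ind A S) (F : Finset V) (hFS : ∀ x ∈ F, x ∉ S)
    (T : V → Finset V)
    (hT : ∀ x ∈ F, x ∈ T x ∧ T x ⊆ insert x S ∧ (NB A (T x)).card < (T x).card) :
    (NB A (F.biUnion T)).card + F.card ≤ (F.biUnion T).card := by
  induction F using Finset.induction_on with
  | empty => simp [NB]
  | @insert y F hy IH =>
    have hFS' : ∀ x ∈ F, x ∉ S := fun x hx => hFS x (mem_insert_of_mem hx)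
    have hT' : ∀ x ∈ F, x ∈ T x ∧ T x ⊆ insert x S ∧ (NB A (T x)).card < (T x).card :=
      fun x hx => hT x (mem_insert_of_mem hx)
    have IH' := IH hFS' hT'
    have hTy := hT y (mem_insert_self y F)
    set A' := F.biUnion T with hA'
    have hins : (insert y F).biUnion T = A' ∪ T y := by
      rw [Finset.biUnion_insert, union_comm]
    rw [hins]
    have hcap : A' ∩ T y ⊆ S := by
      intro z hz
      have hz1 := (mem_inter.mp hz).1
      have hz2 := (mem_inter.mp hz).2
      have hz2' := hTy.2.1 hz2
      rcases mem_insert.mp hz2' with rfl | hzS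
      · rcases mem_biUnion.mp hz1 with ⟨x, hxF, hzTx⟩
        have := (hT' x hxF).2.1 hzTx
        rcases mem_insert.mp this with rfl | h
        · exact absurd hxF hy
        · exact h
      · exact hzS
    have h1 : (NB A (A' ∪ T y)).card + (NB A A' ∩ NB A (T y)).card
        = (NB A A').card + (NB A (T y)).card := by
      rw [NB_union]; exact Finset.card_union_add_card_inter _ _
    have h2 : NB A (A' ∩ T y) ⊆ NB A A' ∩ NB A (T y) :=
      Finset.subset_inter (NB_mono A inter_subset_left) (NB_mono A inter_subset_right)
    have h3 : (A' ∩ T y).card ≤ (NB A (A' ∩ T y)).card := hS _ hcap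
    have h4 : (A' ∪ T y).card + (A' ∩ T y).card = A'.card + (T y).card :=
      Finset.card_union_add_card_inter _ _
    have h5 := Finset.card_le_card h2
    have hcy : (insert y F).card = F.card + 1 := by rw [Finset.card_insert_of_notMem hy]
    omega

/-- Exchange property of the transversal matroid (via Hall-style counting). -/
lemma exchange {I J : Finset V} (hI : Ind A I) (hJ : Ind A J) (h : I.card < J.card) :
    ∃ x ∈ J, x ∉ I ∧ Ind A (insert x I) := by
  by_contra hcon
  push_neg at hcon
  have key : ∀ x : V, ∃ Tx : Finset V,
      x ∈ J \ I → x ∈ Tx ∧ Tx ⊆ insert x I ∧ (NB A Tx).card < Tx.card := by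
    intro x
    by_cases hx : x ∈ J \ I
    · have hxJ := (mem_sdiff.mp hx).1
      have hxI := (mem_sdiff.mp hx).2
      have hni : ¬ Ind A (insert x I) := hcon x hxJ hxI
      rw [Ind] at hni
      push_neg at hni
      obtain ⟨T, hT1, hT2⟩ := hni
      refine ⟨T, fun _ => ⟨?_, hT1, hT2⟩⟩
      by_contra hxT
      have : T ⊆ I := fun z hz => by
        rcases mem_insert.mp (hT1 hz) with rfl | h
        · exact absurd hz hxT
        · exact h
      exact absurd (hI T this) (not_le.mpr hT2)
    · exact ⟨∅, fun h => absurd h hx⟩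
  choose T hT using key
  have hdef := deficiency A hI (J \ I) (fun x hx => (mem_sdiff.mp hx).2) T
    (fun x hx => hT x hx)
  set U := (J \ I).biUnion T with hU
  have hUsub : U \ J ⊆ I \ J := by
    intro z hz
    have hz1 := (mem_sdiff.mp hz).1
    have hz2 := (mem_sdiff.mp hz).2
    rcases mem_biUnion.mp hz1 with ⟨x, hxJI, hzTx⟩
    have := (hT x hxJI).2.1 hzTx
    rcases mem_insert.mp this with rfl | hzI
    · exact absurd (mem_sdiff.mp hxJI).1 hz2
    · exact mem_sdiff.mpr ⟨hzI, hz2⟩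
  have hJ' : (U ∩ J).card ≤ (NB A (U ∩ J)).card := hJ _ inter_subset_right
  have hNBm := Finset.card_le_card (NB_mono A (inter_subset_left (s₂ := J) (s₁ := U)))
  have hsplit : (U ∩ J).card + (U \ J).card = U.card := Finset.card_inter_add_card_sdiff _ _
  have h1 := Finset.card_le_card hUsub
  have h2 : (J ∩ I).card + (J \ I).card = J.card := Finset.card_inter_add_card_sdiff _ _
  have h3 : (I ∩ J).card + (I \ J).card = I.card := Finset.card_inter_add_card_sdiff _ _
  have h4 : (J ∩ I).card = (I ∩ J).card := by rw [inter_comm]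
  omega

end Aux

section Chains
open scoped Classical

variable {V : Type*} [Fintype V] [DecidableEq V] {A : V → V → Prop}

/-- From an independent set, get a matching function via Hall's theorem. -/
lemma ind_matching (A : V → V → Prop) {S : Finset V} (hS : Ind A S) :
    ∃ F : V → V, (∀ v ∈ S, Relation.TransGen A v (F v)) ∧ Set.InjOn F S := by
  have hall : ∀ s : Finset {x // x ∈ S}, s.card ≤ (s.biUnion (fun x => nbr A x.1)).card := by
    intro s
    have h1 : (s.image Subtype.val).card = s.card :=
      Finset.card_image_of_injective _ Subtype.val_injective
    have h2 : s.biUnion (fun x => nbr A x.1) = (s.image Subtype.val).biUnion (nbr A) := by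
      ext z; simp [mem_biUnion]
    have h3 : s.image Subtype.val ⊆ S := by
      intro z hz; rcases mem_image.mp hz with ⟨x, _, rfl⟩; exact x.2
    rw [h2, ← h1]
    exact hS _ h3
  obtain ⟨f, hfinj, hf⟩ := (Finset.all_card_le_biUnion_card_iff_exists_injective _).mp hall
  refine ⟨fun v => if h : v ∈ S then f ⟨v, h⟩ else v, ?_, ?_⟩
  · intro v hv
    simp only [dif_pos hv]
    exact (mem_nbr A).mp (hf ⟨v, hv⟩)
  · intro u hu v hv h
    have hu' : u ∈ S := Finset.mem_coe.mp hu
    have hv' : v ∈ S := Finset.mem_coe.mp hv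
    simp only [dif_pos hu', dif_pos hv'] at h
    exact congrArg Subtype.val (hfinj h)

variable (hacyc : ∀ v, ¬ Relation.TransGen A v v)
variable {S : Finset V} {F : V → V}
variable (hF1 : ∀ v ∈ S, Relation.TransGen A v (F v)) (hF2 : Set.InjOn F S)

/-- The successor relation of the matching. -/
def mrel (S : Finset V) (F : V → V) (a b : V) : Prop := a ∈ S ∧ b = F a

include hF1 in
lemma mrel_R {a b : V} (h : mrel S F a b) : Relation.TransGen A a b := by
  rcases h with ⟨ha, rfl⟩; exact hF1 _ ha

include hF1 in
lemma reach_R {a b : V} (h : Relation.ReflTransGen (mrel S F) a b) :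
    a = b ∨ Relation.TransGen A a b := by
  induction h with
  | refl => exact Or.inl rfl
  | tail hab hbc IH =>
    have hR := mrel_R hF1 hbc
    rcases IH with rfl | h
    · exact Or.inr hR
    · exact Or.inr (h.trans hR)

include hF2 in
lemma reach_comm {a b c : V} (hac : Relation.ReflTransGen (mrel S F) a c)
    (hbc : Relation.ReflTransGen (mrel S F) b c) :
    Relation.ReflTransGen (mrel S F) a b ∨ Relation.ReflTransGen (mrel S F) b a := by
  induction hac using Relation.ReflTransGen.head_induction_on with
  | refl => exact Or.inr hbc
  | head hstep _ IH =>
    rcases IH with h1 | h1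
    · exact Or.inl (Relation.ReflTransGen.head hstep h1)
    · rename_i x y hrest
      rcases Relation.ReflTransGen.cases_tail h1 with rfl | ⟨z, hbz, hza⟩
      · exact Or.inl (Relation.ReflTransGen.single hstep)
      · have hz : z = x := hF2 hza.1 hstep.1 (hza.2.symm.trans hstep.2)
        exact Or.inr (hz ▸ hbz)

include hacyc hF1 in
lemma exists_top : ∀ v : V, ∃ t : V, Relation.ReflTransGen (mrel S F) v t ∧ t ∉ S := by
  have key : ∀ n : ℕ, ∀ v : V, (nbr A v).card ≤ n →
      ∃ t : V, Relation.ReflTransGen (mrel S F) v t ∧ t ∉ S := by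
    intro n
    induction n with
    | zero =>
      intro v hv
      by_cases hvS : v ∈ S
      · exfalso
        have h1 : F v ∈ nbr A v := (mem_nbr A).mpr (hF1 v hvS)
        have := Finset.card_pos.mpr ⟨F v, h1⟩
        omega
      · exact ⟨v, Relation.ReflTransGen.refl, hvS⟩
    | succ n IH =>
      intro v hv
      by_cases hvS : v ∈ S
      · have hR : Relation.TransGen A v (F v) := hF1 v hvS
        have hsub : nbr A (F v) ⊆ nbr A v := by
          intro u hu; exact (mem_nbr A).mpr (hR.trans ((mem_nbr A).mp hu))
        have hmem : F v ∈ nbr A v := (mem_nbr A).mpr hR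
        have hnot : F v ∉ nbr A (F v) := fun h => hacyc _ ((mem_nbr A).mp h)
        have hlt : (nbr A (F v)).card < (nbr A v).card :=
          Finset.card_lt_card (Finset.ssubset_iff_of_subset hsub |>.mpr ⟨F v, hmem, hnot⟩)
        obtain ⟨t, ht1, ht2⟩ := IH (F v) (by omega)
        exact ⟨t, Relation.ReflTransGen.head ⟨hvS, rfl⟩ ht1, ht2⟩
      · exact ⟨v, Relation.ReflTransGen.refl, hvS⟩
  intro v
  exact key (nbr A v).card v le_rfl

lemma top_no_step {t b : V} (ht : t ∉ S) (h : Relation.ReflTransGen (mrel S F) t b) : t = b := by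
  rcases Relation.ReflTransGen.cases_head h with rfl | ⟨c, hc, _⟩
  · rfl
  · exact absurd hc.1 ht

include hF1 hF2 in
lemma same_top_comparable {u v t : V} (hu : Relation.ReflTransGen (mrel S F) u t)
    (hv : Relation.ReflTransGen (mrel S F) v t) (huv : u ≠ v) :
    Relation.TransGen A u v ∨ Relation.TransGen A v u := by
  rcases reach_comm hF2 hu hv with h | h
  · rcases reach_R hF1 h with rfl | h'
    · exact absurd rfl huv
    · exact Or.inl h'
  · rcases reach_R hF1 h with rfl | h'
    · exact absurd rfl huv
    · exact Or.inr h'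

end Chains

section Levels
open scoped Classical

variable {V : Type*} [Fintype V] [DecidableEq V] (A : V → V → Prop)
variable (hacyc : ∀ v, ¬ Relation.TransGen A v v)

include hacyc in
/-- key bound: an antichain and an independent set inside an up-closed set `W`. -/
lemma antichain_ind_bound {W B S : Finset V}
    (hW : ∀ v ∈ W, ∀ u, Relation.TransGen A v u → u ∈ W)
    (hB : B ⊆ W) (hBa : IsAntichainD A B)
    (hSW : S ⊆ W) (hS : Ind A S) :
    B.card + S.card ≤ W.card := by
  obtain ⟨F, hF1, hF2⟩ := ind_matching A hS
  -- top map
  have htop : ∀ v : V, ∃ t : V, Relation.ReflTransGen (mrel S F) v t ∧ t ∉ S :=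
    exists_top hacyc hF1
  choose top htop1 htop2 using htop
  have hmap : ∀ b ∈ B, top b ∈ W \ S := by
    intro b hb
    refine mem_sdiff.mpr ⟨?_, htop2 b⟩
    rcases reach_R hF1 (htop1 b) with h | h
    · exact h ▸ hB hb
    · exact hW b (hB hb) _ h
  have hinj : ∀ b ∈ B, ∀ b' ∈ B, top b = top b' → b = b' := by
    intro b hb b' hb' h
    by_contra hne
    rcases same_top_comparable hF1 hF2 (htop1 b) (h ▸ htop1 b') hne with hc | hc
    · exact hBa b hb b' hb' hne hc
    · exact hBa b' hb' b hb (Ne.symm hne) hc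
  have hcard : B.card ≤ (W \ S).card := Finset.card_le_card_of_injOn top hmap
    (fun b hb b' hb' h => hinj b (Finset.mem_coe.mp hb) b' (Finset.mem_coe.mp hb') h)
  have := Finset.card_sdiff_add_card_eq_card hSW
  omega

/-- maximum independent subset of `W` with an antichain certificate. -/
lemma exists_max_ind (W : Finset V) :
    ∃ S ⊆ W, Ind A S ∧ ∃ B ⊆ W, IsAntichainD A B ∧ W.card ≤ S.card + B.card := by
  have hne : (W.powerset.filter (Ind A)).Nonempty :=
    ⟨∅, Finset.mem_filter.mpr ⟨Finset.mem_powerset.mpr (Finset.empty_subset W), ind_empty A⟩⟩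
  obtain ⟨S, hSmem, hSmax⟩ := Finset.exists_max_image _ Finset.card hne
  have hSW : S ⊆ W := Finset.mem_powerset.mp (Finset.mem_filter.mp hSmem).1
  have hS : Ind A S := (Finset.mem_filter.mp hSmem).2
  have hmax : ∀ x ∈ W \ S, ¬ Ind A (insert x S) := by
    intro x hx hind
    have hxW := (mem_sdiff.mp hx).1
    have hxS := (mem_sdiff.mp hx).2
    have hmem : insert x S ∈ W.powerset.filter (Ind A) :=
      Finset.mem_filter.mpr ⟨Finset.mem_powerset.mpr (Finset.insert_subset hxW hSW), hind⟩
    have := hSmax _ hmem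
    rw [Finset.card_insert_of_notMem hxS] at this
    omega
  have key : ∀ x : V, ∃ Tx : Finset V,
      x ∈ W \ S → x ∈ Tx ∧ Tx ⊆ insert x S ∧ (NB A Tx).card < Tx.card := by
    intro x
    by_cases hx : x ∈ W \ S
    · have hni := hmax x hx
      rw [Ind] at hni
      push_neg at hni
      obtain ⟨T, hT1, hT2⟩ := hni
      refine ⟨T, fun _ => ⟨?_, hT1, hT2⟩⟩
      by_contra hxT
      have hTS : T ⊆ S := fun z hz => by
        rcases mem_insert.mp (hT1 hz) with rfl | h
        · exact absurd hz hxT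
        · exact h
      exact absurd (hS T hTS) (not_le.mpr hT2)
    · exact ⟨∅, fun h => absurd h hx⟩
  choose T hT using key
  have hdef := deficiency A hS (W \ S) (fun x hx => (mem_sdiff.mp hx).2) T
    (fun x hx => hT x hx)
  set U := (W \ S).biUnion T with hU
  have hUW : U ⊆ W := by
    intro z hz
    rcases mem_biUnion.mp hz with ⟨x, hx, hzT⟩
    rcases mem_insert.mp ((hT x hx).2.1 hzT) with rfl | h
    · exact (mem_sdiff.mp hx).1
    · exact hSW h
  refine ⟨S, hSW, hS, U \ NB A U, (sdiff_subset).trans hUW, ?_, ?_⟩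
  · intro u hu v hv huv hR
    have hv1 := (mem_sdiff.mp hv).2
    exact hv1 (mem_biUnion.mpr ⟨u, (mem_sdiff.mp hu).1, (mem_nbr A).mpr hR⟩)
  · have h1 : U.card ≤ (NB A U).card + (U \ NB A U).card := by
      have h2 : (U ∩ NB A U).card + (U \ NB A U).card = U.card :=
        Finset.card_inter_add_card_sdiff _ _
      have h3 : (U ∩ NB A U).card ≤ (NB A U).card :=
        Finset.card_le_card inter_subset_right
      omega
    have h4 := Finset.card_sdiff_add_card_eq_card hSW
    omega

/-- Augment an independent set to the size of another. -/
lemma augment {S J : Finset V} (hS : Ind A S) (hJ : Ind A J) :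
    ∃ S', Ind A S' ∧ S ⊆ S' ∧ S' ⊆ S ∪ J ∧ J.card ≤ S'.card := by
  by_cases h : J.card ≤ S.card
  · exact ⟨S, hS, subset_rfl, subset_union_left, h⟩
  · have key : ∀ n : ℕ, ∀ S₀ : Finset V, Ind A S₀ → S ⊆ S₀ → S₀ ⊆ S ∪ J →
        J.card ≤ S₀.card + n → ∃ S', Ind A S' ∧ S ⊆ S' ∧ S' ⊆ S ∪ J ∧ J.card ≤ S'.card := by
      intro n
      induction n with
      | zero => intro S₀ h1 h2 h3 h4; exact ⟨S₀, h1, h2, h3, by omega⟩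
      | succ n IH =>
        intro S₀ h1 h2 h3 h4
        by_cases hle : J.card ≤ S₀.card
        · exact ⟨S₀, h1, h2, h3, hle⟩
        · obtain ⟨x, hxJ, hxS₀, hind⟩ := exchange A h1 hJ (by omega)
          refine IH _ hind (h2.trans (Finset.subset_insert _ _)) ?_ ?_
          · exact Finset.insert_subset (Finset.mem_union_right _ hxJ) h3
          · rw [Finset.card_insert_of_notMem hxS₀]; omega
    exact key J.card S hS subset_rfl subset_union_left (by omega)

end Levels

section Main
open scoped Classical

variable {V : Type*} [Fintype V] [DecidableEq V] (A : V → V → Prop) (π : V → ℕ)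

noncomputable def Upt (k : ℕ) : Finset V := univ.filter (fun v => k ≤ π v)

noncomputable def wk (k : ℕ) : ℕ :=
  (((Upt π k).powerset).filter (IsAntichainD A)).sup Finset.card

lemma mem_Upt {k : ℕ} {v : V} : v ∈ Upt π k ↔ k ≤ π v := by simp [Upt]

variable (hacyc : ∀ v, ¬ Relation.TransGen A v v)
variable (hmono : ∀ u v, A u v → π u ≤ π v)

include hmono in
lemma R_mono {u v : V} (h : Relation.TransGen A u v) : π u ≤ π v := by
  induction h with
  | single h => exact hmono _ _ h
  | tail _ h IH => exact IH.trans (hmono _ _ h)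

include hmono in
lemma Upt_upclosed {k : ℕ} : ∀ v ∈ Upt π k, ∀ u, Relation.TransGen A v u → u ∈ Upt π k := by
  intro v hv u hR
  exact (mem_Upt π).mpr (le_trans ((mem_Upt π).mp hv) (R_mono A π hmono hR))

lemma Upt_anti {k k' : ℕ} (h : k ≤ k') : Upt π k' ⊆ Upt π k :=
  fun v hv => (mem_Upt π).mpr (le_trans h ((mem_Upt π).mp hv))

lemma antichain_subset {B B' : Finset V} (h : B' ⊆ B) (hB : IsAntichainD A B) :
    IsAntichainD A B' := fun u hu v hv => hB u (h hu) v (h hv)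

lemma antichain_empty : IsAntichainD A (∅ : Finset V) := by
  intro u hu; simp at hu

lemma exists_antichain_wk (k : ℕ) :
    ∃ B ⊆ Upt π k, IsAntichainD A B ∧ B.card = wk A π k := by
  have hne : (((Upt π k).powerset).filter (IsAntichainD A)).Nonempty :=
    ⟨∅, mem_filter.mpr ⟨mem_powerset.mpr (empty_subset _), antichain_empty A⟩⟩
  obtain ⟨B, hB, hBs⟩ := Finset.exists_mem_eq_sup _ hne Finset.card
  exact ⟨B, mem_powerset.mp (mem_filter.mp hB).1, (mem_filter.mp hB).2, hBs.symm⟩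

lemma le_wk {k : ℕ} {B : Finset V} (hBU : B ⊆ Upt π k) (hB : IsAntichainD A B) :
    B.card ≤ wk A π k :=
  Finset.le_sup (mem_filter.mpr ⟨mem_powerset.mpr hBU, hB⟩)

lemma wk_anti {k k' : ℕ} (h : k ≤ k') : wk A π k' ≤ wk A π k := by
  obtain ⟨B, h1, h2, h3⟩ := exists_antichain_wk A π k'
  rw [← h3]
  exact le_wk A π (h1.trans (Upt_anti π h)) h2

lemma wk_le_card (k : ℕ) : wk A π k ≤ (Upt π k).card := by
  obtain ⟨B, h1, h2, h3⟩ := exists_antichain_wk A π k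
  rw [← h3]
  exact Finset.card_le_card h1

include hacyc hmono in
lemma ind_level_bound {k : ℕ} {S : Finset V} (hSW : S ⊆ Upt π k) (hS : Ind A S) :
    S.card + wk A π k ≤ (Upt π k).card := by
  obtain ⟨B, h1, h2, h3⟩ := exists_antichain_wk A π k
  have := antichain_ind_bound A hacyc (Upt_upclosed A π hmono) h1 h2 hSW hS
  omega

include hacyc hmono in
lemma maxind_level (k : ℕ) :
    ∃ J ⊆ Upt π k, Ind A J ∧ J.card + wk A π k = (Upt π k).card := by
  obtain ⟨S, hSW, hS, B, hBW, hBa, hcard⟩ := exists_max_ind A (Upt π k)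
  have h1 := le_wk A π hBW hBa
  have h2 := ind_level_bound A π hacyc hmono hSW hS
  exact ⟨S, hSW, hS, by omega⟩

include hacyc hmono in
lemma exists_level_ind :
    ∃ S : Finset V, Ind A S ∧
      ∀ j : ℕ, (S ∩ Upt π j).card + wk A π j = (Upt π j).card := by
  set K := (univ : Finset V).sup π with hK
  have hUem : ∀ j, K + 1 ≤ j → Upt π j = ∅ := by
    intro j hj
    rw [Finset.eq_empty_iff_forall_notMem]
    intro v hv
    have h1 : π v ≤ K := Finset.le_sup (mem_univ v)
    have h2 := (mem_Upt π).mp hv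
    omega
  have Qstep : ∀ k : ℕ,
      (∃ S ⊆ Upt π (k+1), Ind A S ∧
        ∀ j, k+1 ≤ j → (S ∩ Upt π j).card + wk A π j = (Upt π j).card) →
      (∃ S ⊆ Upt π k, Ind A S ∧
        ∀ j, k ≤ j → (S ∩ Upt π j).card + wk A π j = (Upt π j).card) := by
    rintro k ⟨S', hS'W, hS'ind, hS'j⟩
    obtain ⟨J, hJW, hJind, hJcard⟩ := maxind_level A π hacyc hmono k
    obtain ⟨S'', hS''ind, hsub1, hsub2, hcard⟩ := augment A hS'ind hJind
    have hS''W : S'' ⊆ Upt π k :=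
      hsub2.trans (Finset.union_subset (hS'W.trans (Upt_anti π (Nat.le_succ k))) hJW)
    refine ⟨S'', hS''W, hS''ind, ?_⟩
    intro j hj
    rcases Nat.eq_or_lt_of_le hj with heqj | hlt
    · subst heqj
      have heq : S'' ∩ Upt π k = S'' := Finset.inter_eq_left.mpr hS''W
      have hub := ind_level_bound A π hacyc hmono hS''W hS''ind
      rw [heq]
      omega
    · have h1 := hS'j j hlt
      have hmon : S' ∩ Upt π j ⊆ S'' ∩ Upt π j :=
        Finset.inter_subset_inter hsub1 Finset.Subset.rfl
      have hc1 := Finset.card_le_card hmon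
      have hub := ind_level_bound A π hacyc hmono (S := S'' ∩ Upt π j) (k := j)
        Finset.inter_subset_right (ind_mono A Finset.inter_subset_left hS''ind)
      omega
  have Qall : ∀ d : ℕ,
      ∃ S ⊆ Upt π (K+1-d), Ind A S ∧
        ∀ j, K+1-d ≤ j → (S ∩ Upt π j).card + wk A π j = (Upt π j).card := by
    intro d
    induction d with
    | zero =>
      refine ⟨∅, empty_subset _, ind_empty A, ?_⟩
      intro j hj
      have h1 := hUem j (by omega)
      have h2 := wk_le_card A π j
      rw [h1] at h2 ⊢
      simpa using h2
    | succ d IH =>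
      by_cases hd : K + 1 - d = 0
      · have heq : K+1-(d+1) = K+1-d := by omega
        rw [heq]
        exact IH
      · have h2 : K+1-d = (K+1-(d+1)) + 1 := by omega
        rw [h2] at IH
        exact Qstep _ IH
  obtain ⟨S, hSW, hSind, hSj⟩ := Qall (K+1)
  refine ⟨S, hSind, fun j => hSj j (by omega)⟩

end Main

/-- Min-max strengthening of Dilworth's theorem: for a monotone weight function on a finite DAG
of width `w`, there are a chain partition into `w` chains and a tower of antichains with equal
price and value. -/
theorem stmt_1 {V : Type*} [Fintype V] [DecidableEq V] (A : V → V → Prop)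
    (hacyc : ∀ v, ¬ Relation.TransGen A v v)
    (π : V → ℕ)
    (hmono : ∀ u v, A u v → π u ≤ π v)
    (w : ℕ)
    (hw_ex : ∃ N : Finset V, IsAntichainD A N ∧ N.card = w)
    (hw_max : ∀ N : Finset V, IsAntichainD A N → N.card ≤ w) :
    ∃ (P : Finset (Finset V)) (N : Fin w → Finset V),
      P.card = w ∧
      (∀ C ∈ P, IsChainD A C) ∧
      (∀ C ∈ P, C.Nonempty) ∧
      (P : Set (Finset V)).PairwiseDisjoint id ∧
      P.biUnion id = Finset.univ ∧
      (∀ i, IsAntichainD A (N i)) ∧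
      (∀ i : Fin w, (N i).card = (i : ℕ) + 1) ∧
      (∑ C ∈ P, C.sup π) = ∑ i : Fin w, sInf (π '' (N i : Set V)) := by
  classical
  set K := (univ : Finset V).sup π with hK
  have hπK : ∀ t : V, π t ≤ K := fun t => Finset.le_sup (mem_univ t)
  have hUem : Upt π (K+1) = ∅ := by
    rw [Finset.eq_empty_iff_forall_notMem]
    intro v hv
    have h2 := (mem_Upt π).mp hv
    have := hπK v
    omega
  have hU0 : Upt π 0 = (univ : Finset V) := by
    ext v; simp [mem_Upt]
  have hw0 : wk A π 0 = w := by
    apply le_antisymm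
    · apply Finset.sup_le
      intro B hB
      exact hw_max B (mem_filter.mp hB).2
    · obtain ⟨N0, hN0, hN0c⟩ := hw_ex
      rw [← hN0c]
      exact le_wk A π (by rw [hU0]; exact subset_univ N0) hN0
  -- the simultaneous independent set
  obtain ⟨S, hSind, hSj⟩ := exists_level_ind A π hacyc hmono
  -- its matching
  obtain ⟨F, hF1, hF2⟩ := ind_matching A hSind
  -- tops
  have htopex := exists_top (A := A) hacyc hF1
  choose top htop1 htop2 using htopex
  -- uniqueness of tops
  have hdiamond : ∀ {t t' : V}, t ∉ S → t' ∉ S → ∀ {v : V},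
      Relation.ReflTransGen (mrel S F) v t → Relation.ReflTransGen (mrel S F) v t' → t = t' := by
    intro t t' ht ht' v h1
    induction h1 using Relation.ReflTransGen.head_induction_on with
    | refl => exact fun h2 => top_no_step ht h2
    | head hstep hrest IH =>
      intro h2
      rcases Relation.ReflTransGen.cases_head h2 with rfl | ⟨c, hc, hct'⟩
      · exact absurd hstep.1 ht'
      · have hca : c = _ := hc.2.trans hstep.2.symm
        exact IH (hca ▸ hct')
  have htopu : ∀ v t : V, Relation.ReflTransGen (mrel S F) v t → t ∉ S → top v = t :=
    fun v t h ht => hdiamond (htop2 v) ht (htop1 v) h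
  have htfix : ∀ t : V, t ∉ S → top t = t :=
    fun t ht => htopu t t Relation.ReflTransGen.refl ht
  -- cardinality of S
  have hScard : S.card + w = Fintype.card V := by
    have h0 := hSj 0
    rw [hU0, Finset.inter_univ, Finset.card_univ, hw0] at h0
    exact h0
  set Tops := (univ : Finset V) \ S with hTops
  have hTopsmem : ∀ t : V, t ∈ Tops ↔ t ∉ S := by
    intro t; simp [hTops]
  have hTopscard : Tops.card = w := by
    have h1 : Tops.card = Fintype.card V - S.card := by
      rw [hTops, Finset.card_sdiff_of_subset (subset_univ S), Finset.card_univ]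
    omega
  set chainOf : V → Finset V := fun t => univ.filter (fun v => top v = t) with hchainOf
  have hmemchain : ∀ v : V, v ∈ chainOf (top v) := by
    intro v; simp [hchainOf]
  have hmemchain' : ∀ v t : V, v ∈ chainOf t ↔ top v = t := by
    intro v t; simp [hchainOf]
  have htself : ∀ t : V, t ∈ Tops → t ∈ chainOf t := by
    intro t ht
    rw [hmemchain']
    exact htfix t ((hTopsmem t).mp ht)
  have hinj : ∀ t ∈ Tops, ∀ t' ∈ Tops, chainOf t = chainOf t' → t = t' := by
    intro t ht t' ht' h
    have := htself t ht
    rw [h, hmemchain'] at this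
    rw [← this, htfix t ((hTopsmem t).mp ht)]
  set P : Finset (Finset V) := Tops.image chainOf with hP
  have hPcard : P.card = w := by
    rw [hP, Finset.card_image_of_injOn hinj, hTopscard]
  have hPchain : ∀ C ∈ P, IsChainD A C := by
    intro C hC
    obtain ⟨t, htT, rfl⟩ := mem_image.mp hC
    intro u hu v hv huv
    have hu' := (hmemchain' u t).mp hu
    have hv' := (hmemchain' v t).mp hv
    exact same_top_comparable hF1 hF2 (hu' ▸ htop1 u) (hv' ▸ htop1 v) huv
  have hPne : ∀ C ∈ P, C.Nonempty := by
    intro C hC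
    obtain ⟨t, htT, rfl⟩ := mem_image.mp hC
    exact ⟨t, htself t htT⟩
  have hPdisj : (P : Set (Finset V)).PairwiseDisjoint id := by
    intro X hX Y hY hXY
    obtain ⟨t, htT, rfl⟩ := mem_image.mp (Finset.mem_coe.mp hX)
    obtain ⟨t', htT', rfl⟩ := mem_image.mp (Finset.mem_coe.mp hY)
    simp only [Function.onFun, id]
    rw [Finset.disjoint_left]
    intro v hv hv'
    exact hXY (by rw [← (hmemchain' v t).mp hv, (hmemchain' v t').mp hv'])
  have hPcover : P.biUnion id = (univ : Finset V) := by
    apply Finset.eq_univ_of_forall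
    intro v
    rw [Finset.mem_biUnion]
    refine ⟨chainOf (top v), ?_, hmemchain v⟩
    exact mem_image.mpr ⟨top v, (hTopsmem _).mpr (htop2 v), rfl⟩
  -- price computation
  have hsupC : ∀ t ∈ Tops, (chainOf t).sup π = π t := by
    intro t ht
    apply le_antisymm
    · apply Finset.sup_le
      intro v hv
      have hv' := (hmemchain' v t).mp hv
      rcases reach_R hF1 (hv' ▸ htop1 v) with rfl | h
      · exact le_rfl
      · exact R_mono A π hmono h
    · exact Finset.le_sup (htself t ht)
  have hsum1 : (∑ C ∈ P, C.sup π) = ∑ t ∈ Tops, π t := by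
    rw [hP, Finset.sum_image hinj]
    exact Finset.sum_congr rfl hsupC
  have hfilTops : ∀ k : ℕ, (Tops.filter (fun t => k ≤ π t)).card + (S ∩ Upt π k).card
      = (Upt π k).card := by
    intro k
    have hfe : Tops.filter (fun t => k ≤ π t) = Upt π k \ S := by
      ext v
      simp only [hTops, Finset.mem_filter, Finset.mem_sdiff, Finset.mem_univ, true_and,
        mem_Upt]
      tauto
    have h1 : (Upt π k ∩ S).card + (Upt π k \ S).card = (Upt π k).card :=
      Finset.card_inter_add_card_sdiff _ _
    have h4 : (S ∩ Upt π k).card = (Upt π k ∩ S).card := by rw [Finset.inter_comm]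
    rw [hfe]
    omega
  have hsum2 : (∑ t ∈ Tops, π t) = ∑ k ∈ Finset.Icc 1 K, wk A π k := by
    have step1 : (∑ t ∈ Tops, π t)
        = ∑ t ∈ Tops, ((Finset.Icc 1 K).filter (fun k => k ≤ π t)).card := by
      refine Finset.sum_congr rfl fun t _ => ?_
      have hft : (Finset.Icc 1 K).filter (fun k => k ≤ π t) = Finset.Icc 1 (π t) := by
        ext k
        simp only [Finset.mem_filter, Finset.mem_Icc]
        have := hπK t
        omega
      rw [hft, Nat.card_Icc]
      omega
    rw [step1]
    have step2 : ∀ t ∈ Tops, ((Finset.Icc 1 K).filter (fun k => k ≤ π t)).card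
        = ∑ k ∈ Finset.Icc 1 K, if k ≤ π t then 1 else 0 := by
      intro t _
      rw [Finset.card_filter]
    rw [Finset.sum_congr rfl step2, Finset.sum_comm]
    refine Finset.sum_congr rfl fun k hk => ?_
    rw [← Finset.card_filter]
    have h2 := hSj k
    have h3 := hfilTops k
    omega
  -- the tower
  set kkn : ℕ → ℕ := fun m => Nat.findGreatest (fun k => m+1 ≤ wk A π k) K with hkkn
  have hkkn_le : ∀ m, kkn m ≤ K := fun m => Nat.findGreatest_le K
  have hkkn_spec : ∀ m, m < w → m+1 ≤ wk A π (kkn m) := by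
    intro m hm
    have h0 : m+1 ≤ wk A π 0 := by rw [hw0]; omega
    exact Nat.findGreatest_spec (P := fun k => m+1 ≤ wk A π k) (Nat.zero_le K) h0
  have hkkn_not : ∀ m, ¬ (m+1 ≤ wk A π (kkn m + 1)) := by
    intro m hcon
    by_cases h : kkn m + 1 ≤ K
    · exact Nat.findGreatest_is_greatest (P := fun k => m+1 ≤ wk A π k)
        (Nat.lt_succ_self _) h hcon
    · have h1 : kkn m + 1 = K + 1 := by have := hkkn_le m; omega
      rw [h1] at hcon
      have h2 := wk_le_card A π (K+1)
      rw [hUem] at h2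
      simp at h2
      omega
  have hkkn_mono : ∀ m k, 1 ≤ k → k ≤ kkn m → m < w → m + 1 ≤ wk A π k := by
    intro m k _ hk hm
    exact le_trans (hkkn_spec m hm) (wk_anti A π hk)
  have hN : ∀ i : Fin w, ∃ Ni : Finset V,
      IsAntichainD A Ni ∧ Ni.card = (i : ℕ) + 1 ∧ sInf (π '' (Ni : Set V)) = kkn i := by
    intro i
    obtain ⟨B, hBW, hBa, hBc⟩ := exists_antichain_wk A π (kkn i)
    have hile : (i : ℕ) + 1 ≤ B.card := by
      rw [hBc]; exact hkkn_spec i i.isLt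
    obtain ⟨Ni, hNiB, hNic⟩ := Finset.exists_subset_card_eq (s := B) (n := (i : ℕ)+1) hile
    have hNia : IsAntichainD A Ni := antichain_subset A hNiB hBa
    have hNine : Ni.Nonempty := Finset.card_pos.mp (by omega)
    obtain ⟨v₀, hv₀⟩ := hNine
    have hsne : (π '' (Ni : Set V)).Nonempty := ⟨π v₀, v₀, Finset.mem_coe.mpr hv₀, rfl⟩
    have hlow : kkn i ≤ sInf (π '' (Ni : Set V)) := by
      obtain ⟨v, hv, hveq⟩ := Nat.sInf_mem hsne
      rw [← hveq]
      exact (mem_Upt π).mp (hBW (hNiB (Finset.mem_coe.mp hv)))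
    have hhigh : sInf (π '' (Ni : Set V)) ≤ kkn i := by
      by_contra hcon
      push_neg at hcon
      have hsub : Ni ⊆ Upt π (kkn i + 1) := by
        intro v hv
        have h1 : sInf (π '' (Ni : Set V)) ≤ π v :=
          Nat.sInf_le ⟨v, Finset.mem_coe.mpr hv, rfl⟩
        exact (mem_Upt π).mpr (by omega)
      have := le_wk A π hsub hNia
      rw [hNic] at this
      exact hkkn_not i this
    exact ⟨Ni, hNia, hNic, le_antisymm hhigh hlow⟩
  choose N hN1 hN2 hN3 using hN
  refine ⟨P, N, hPcard, hPchain, hPne, hPdisj, hPcover, hN1, hN2, ?_⟩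
  rw [hsum1, hsum2]
  have hs3 : (∑ i : Fin w, sInf (π '' (N i : Set V))) = ∑ i : Fin w, kkn i :=
    Finset.sum_congr rfl fun i _ => hN3 i
  rw [hs3]
  have hs4 : (∑ i : Fin w, kkn (i : ℕ)) = ∑ m ∈ Finset.range w, kkn m :=
    Fin.sum_univ_eq_sum_range _ _
  rw [hs4]
  have hs5 : ∀ m ∈ Finset.range w, kkn m
      = ((Finset.Icc 1 K).filter (fun k => m+1 ≤ wk A π k)).card := by
    intro m hm
    have hmw : m < w := Finset.mem_range.mp hm
    have hft : (Finset.Icc 1 K).filter (fun k => m+1 ≤ wk A π k) = Finset.Icc 1 (kkn m) := by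
      ext k
      simp only [Finset.mem_filter, Finset.mem_Icc]
      constructor
      · rintro ⟨⟨h1, h2⟩, h3⟩
        refine ⟨h1, ?_⟩
        by_contra h4
        push_neg at h4
        exact (Nat.findGreatest_is_greatest (P := fun k => m+1 ≤ wk A π k) h4 h2) h3
      · rintro ⟨h1, h2⟩
        exact ⟨⟨h1, le_trans h2 (hkkn_le m)⟩, hkkn_mono m k h1 h2 hmw⟩
    rw [hft, Nat.card_Icc]
    omega
  rw [Finset.sum_congr rfl hs5]
  have step2 : ∀ m ∈ Finset.range w, ((Finset.Icc 1 K).filter (fun k => m+1 ≤ wk A π k)).card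
      = ∑ k ∈ Finset.Icc 1 K, if m+1 ≤ wk A π k then 1 else 0 := by
    intro m _
    rw [Finset.card_filter]
  rw [Finset.sum_congr rfl step2, Finset.sum_comm]
  refine (Finset.sum_congr rfl fun k hk => ?_).symm
  rw [← Finset.card_filter]
  have hwkw : wk A π k ≤ w := by
    have := wk_anti A π (Nat.zero_le k)
    rw [hw0] at this
    exact this
  have hfr : (Finset.range w).filter (fun m => m+1 ≤ wk A π k) = Finset.range (wk A π k) := by
    ext m
    simp only [Finset.mem_filter, Finset.mem_range]
    omega
  rw [hfr, Finset.card_range]
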